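/- Let n be a positive multiple of 3 and let cm_n : {0,1}^n → {0,1} output 1 iff both the number of 0s and the number of 1s in the input lie in the interval [n/3, 2n/3]. Then cm_n has exactly C(n, n/3)·C(2n/3, n/3) prime implicants, and consequently every ternary decision tree computing the hazard-free extension of cm_n has at least C(n, n/3)·C(2n/3, n/3) leaves. -/

import Mathlib

attribute [local instance 0] Classical.propDecidable

/-- Ternary values: `none` represents the uncertain value `u`,
`some b` represents the Boolean value `b`. -/
abbrev TVal := Option Bool

/-- The resolutions of `x ∈ {0,u,1}^ι`: all Boolean strings agreeing with
the determined coordinates of `x`. -/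
def Res {ι : Type} (x : ι → Option Bool) : Set (ι → Bool) :=
  {y | ∀ i b, x i = some b → y i = b}

/-- The hazard-free extension of a Boolean function `f`. -/
noncomputable def hfext {ι : Type} (f : (ι → Bool) → Bool) (x : ι → Option Bool) :
    Option Bool :=
  if ∀ y ∈ Res x, f y = true then some true
  else if ∀ y ∈ Res x, f y = false then some false
  else none

/-- Number of uncertain (`u`) coordinates of `x`. -/
noncomputable def uCount {ι : Type} [Fintype ι] (x : ι → Option Bool) : ℕ :=
  (Finset.univ.filter fun i : ι => x i = none).card

/-- u-sensitivity of `f` at `x`: the number of coordinates `i` such that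
changing only coordinate `i` can change the value of the hazard-free extension. -/
noncomputable def sensAt {ι : Type} [Fintype ι] (f : (ι → Bool) → Bool)
    (x : ι → Option Bool) : ℕ :=
  (Finset.univ.filter fun i : ι => ∃ y : ι → Option Bool,
      y i ≠ x i ∧ (∀ j, j ≠ i → y j = x j) ∧ hfext f y ≠ hfext f x).card

/-- u-sensitivity of `f`. -/
noncomputable def sensU {ι : Type} [Fintype ι] [DecidableEq ι]
    (f : (ι → Bool) → Bool) : ℕ :=
  Finset.univ.sup fun x : ι → Option Bool => sensAt f x

/-- u-sensitivity of `f` restricted to inputs whose hazard-free value is `b`. -/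
noncomputable def sensULevel {ι : Type} [Fintype ι] [DecidableEq ι]
    (f : (ι → Bool) → Bool) (b : Option Bool) : ℕ :=
  (Finset.univ.filter fun x : ι → Option Bool => hfext f x = b).sup (sensAt f)

/-- Boolean sensitivity of `f` at a Boolean input `x`. -/
noncomputable def boolSensAt {ι : Type} [Fintype ι] [DecidableEq ι]
    (f : (ι → Bool) → Bool) (x : ι → Bool) : ℕ :=
  (Finset.univ.filter fun i : ι => f (Function.update x i (!x i)) ≠ f x).card

/-- Boolean sensitivity of `f`. -/
noncomputable def boolSens {ι : Type} [Fintype ι] [DecidableEq ι]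
    (f : (ι → Bool) → Bool) : ℕ :=
  Finset.univ.sup (boolSensAt f)

/-- There are `k` pairwise disjoint blocks, each of which is sensitive for the
hazard-free extension of `f` at `x`. -/
def HasSensBlocks {ι : Type} (f : (ι → Bool) → Bool) (x : ι → Option Bool)
    (k : ℕ) : Prop :=
  ∃ (B : Fin k → Set ι) (y : Fin k → ι → Option Bool),
    (∀ j j', j ≠ j' → Disjoint (B j) (B j')) ∧
    ∀ j, (∀ i, y j i ≠ x i ↔ i ∈ B j) ∧ hfext f (y j) ≠ hfext f x

/-- u-block sensitivity of `f`. -/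
noncomputable def bsU {ι : Type} (f : (ι → Bool) → Bool) : ℕ :=
  sSup {k | ∃ x, HasSensBlocks f x k}

/-- A ternary string `y` is consistent with a partial assignment
`p : ι → Option (Option Bool)` (`none` = `*`). -/
def Consistent {ι : Type} (y : ι → Option Bool) (p : ι → Option (Option Bool)) :
    Prop :=
  ∀ i v, p i = some v → y i = v

/-- `p` is a certificate for the hazard-free extension of `f` at `x`. -/
def IsCert {ι : Type} (f : (ι → Bool) → Bool) (x : ι → Option Bool)
    (p : ι → Option (Option Bool)) : Prop :=
  Consistent x p ∧ ∀ y, Consistent y p → hfext f y = hfext f x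

/-- Size of a partial assignment: the number of non-`*` coordinates. -/
noncomputable def certSize {ι : Type} [Fintype ι] (p : ι → Option (Option Bool)) :
    ℕ :=
  (Finset.univ.filter fun i : ι => p i ≠ none).card

/-- u-certificate complexity of `f` at `x`. -/
noncomputable def ccAt {ι : Type} [Fintype ι] (f : (ι → Bool) → Bool)
    (x : ι → Option Bool) : ℕ :=
  sInf {k | ∃ p, IsCert f x p ∧ certSize p = k}

/-- u-certificate complexity of `f`. -/
noncomputable def ccU {ι : Type} [Fintype ι] [DecidableEq ι]
    (f : (ι → Bool) → Bool) : ℕ :=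
  Finset.univ.sup fun x : ι → Option Bool => ccAt f x

/-- u-certificate complexity of `f` restricted to inputs with hazard-free value `b`. -/
noncomputable def ccULevel {ι : Type} [Fintype ι] [DecidableEq ι]
    (f : (ι → Bool) → Bool) (b : Option Bool) : ℕ :=
  (Finset.univ.filter fun x : ι → Option Bool => hfext f x = b).sup (ccAt f)

/-- A set of literals (at most one per variable), encoded as a partial Boolean
assignment `q : ι → Option Bool`, is an implicant of `f` if `f` is `true` on
every Boolean input extending `q`. -/
def IsImplicant {ι : Type} (f : (ι → Bool) → Bool) (q : ι → Option Bool) : Prop :=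
  ∀ y : ι → Bool, (∀ i b, q i = some b → y i = b) → f y = true

/-- Dually, an implicate of `f` forces the value `false`. -/
def IsImplicate {ι : Type} (f : (ι → Bool) → Bool) (q : ι → Option Bool) : Prop :=
  ∀ y : ι → Bool, (∀ i b, q i = some b → y i = b) → f y = false

/-- `q'` is a (literal-)subset of `q`. -/
def SubAsn {ι : Type} (q' q : ι → Option Bool) : Prop :=
  ∀ i b, q' i = some b → q i = some b

def IsPrimeImplicant {ι : Type} (f : (ι → Bool) → Bool) (q : ι → Option Bool) :
    Prop :=
  IsImplicant f q ∧ ∀ q', SubAsn q' q → q' ≠ q → ¬ IsImplicant f q'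

def IsPrimeImplicate {ι : Type} (f : (ι → Bool) → Bool) (q : ι → Option Bool) :
    Prop :=
  IsImplicate f q ∧ ∀ q', SubAsn q' q → q' ≠ q → ¬ IsImplicate f q'

/-- Number of literals of a partial assignment. -/
noncomputable def asnSize {ι : Type} [Fintype ι] (q : ι → Option Bool) : ℕ :=
  (Finset.univ.filter fun i : ι => q i ≠ none).card

/-- Ternary decision trees: internal nodes query a variable and branch on the
three possible values `0`, `u`, `1`; leaves output a value in `{0,u,1}`. -/
inductive TTree (ι : Type) : Type where
  | leaf : Option Bool → TTree ι
  | node : ι → TTree ι → TTree ι → TTree ι → TTree ι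

namespace TTree

def eval {ι : Type} : TTree ι → (ι → Option Bool) → Option Bool
  | .leaf b, _ => b
  | .node i t0 tu t1, x =>
    match x i with
    | some false => eval t0 x
    | none => eval tu x
    | some true => eval t1 x

def depth {ι : Type} : TTree ι → ℕ
  | .leaf _ => 0
  | .node _ t0 tu t1 => max (max t0.depth tu.depth) t1.depth + 1

/-- Size of a tree: its number of leaves. -/
def size {ι : Type} : TTree ι → ℕ
  | .leaf _ => 1
  | .node _ t0 tu t1 => t0.size + tu.size + t1.size

end TTree

/-- Boolean decision trees. -/
inductive BTree (ι : Type) : Type where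
  | leaf : Bool → BTree ι
  | node : ι → BTree ι → BTree ι → BTree ι

namespace BTree

def eval {ι : Type} : BTree ι → (ι → Bool) → Bool
  | .leaf b, _ => b
  | .node i t0 t1, x => if x i then eval t1 x else eval t0 x

def depth {ι : Type} : BTree ι → ℕ
  | .leaf _ => 0
  | .node _ t0 t1 => max t0.depth t1.depth + 1

/-- Size of a tree: its number of leaves. -/
def size {ι : Type} : BTree ι → ℕ
  | .leaf _ => 1
  | .node _ t0 t1 => t0.size + t1.size

end BTree

/-- Deterministic u-query complexity: minimal depth of a ternary decision tree
computing the hazard-free extension of `f`. -/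
noncomputable def Du {ι : Type} (f : (ι → Bool) → Bool) : ℕ :=
  sInf {d | ∃ T : TTree ι, (∀ x, T.eval x = hfext f x) ∧ T.depth = d}

/-- Minimal number of leaves of a ternary decision tree computing the
hazard-free extension of `f`. -/
noncomputable def sizeU {ι : Type} (f : (ι → Bool) → Bool) : ℕ :=
  sInf {s | ∃ T : TTree ι, (∀ x, T.eval x = hfext f x) ∧ T.size = s}

/-- Deterministic (Boolean) query complexity of `f`. -/
noncomputable def Dbool {ι : Type} (f : (ι → Bool) → Bool) : ℕ :=
  sInf {d | ∃ T : BTree ι, (∀ x, T.eval x = f x) ∧ T.depth = d}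

/-- Minimal number of leaves of a Boolean decision tree computing `f`. -/
noncomputable def sizeBool {ι : Type} (f : (ι → Bool) → Bool) : ℕ :=
  sInf {s | ∃ T : BTree ι, (∀ x, T.eval x = f x) ∧ T.size = s}

/-- Index type for `MUX_n`: `n` selector bits and `2^n` data bits. -/
abbrev MUXIdx (n : ℕ) := Fin n ⊕ (Fin n → Bool)

/-- The multiplexer function: output the data bit addressed by the selector bits. -/
def MUX (n : ℕ) (z : MUXIdx n → Bool) : Bool :=
  z (Sum.inr fun i => z (Sum.inl i))

/-- `cm_n` outputs 1 iff both the number of 0s and the number of 1s of the input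
lie in `[n/3, 2n/3]`. -/
def cm (n : ℕ) (x : Fin n → Bool) : Bool :=
  decide (n/3 ≤ (Finset.univ.filter fun i => x i = false).card ∧
          (Finset.univ.filter fun i => x i = false).card ≤ 2*n/3 ∧
          n/3 ≤ (Finset.univ.filter fun i => x i = true).card ∧
          (Finset.univ.filter fun i => x i = true).card ≤ 2*n/3)

/-! ### Auxiliary material for `stmt15` -/

section Stmt15Aux

open Finset

variable {n : ℕ}

/-- The set of true-literals of a partial assignment. -/
noncomputable def atr (q : Fin n → Option Bool) : Finset (Fin n) :=
  Finset.univ.filter fun i => q i = some true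

/-- The set of false-literals of a partial assignment. -/
noncomputable def afa (q : Fin n → Option Bool) : Finset (Fin n) :=
  Finset.univ.filter fun i => q i = some false

lemma count_sum15 (y : Fin n → Bool) :
    (Finset.univ.filter fun i => y i = false).card
      + (Finset.univ.filter fun i => y i = true).card = n := by
  have h : (Finset.univ.filter fun i : Fin n => y i = false)
      = Finset.univ.filter fun i : Fin n => ¬ (y i = true) := by
    ext i; cases hy : y i <;> simp [hy]
  rw [h, add_comm, Finset.card_filter_add_card_filter_not, Finset.card_univ,
    Fintype.card_fin]

lemma cm_true_iff15 {m : ℕ} (hm : n = 3 * m) (y : Fin n → Bool) :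
    cm n y = true ↔ m ≤ (Finset.univ.filter fun i => y i = true).card ∧
      (Finset.univ.filter fun i => y i = true).card ≤ 2 * m := by
  have hs := count_sum15 y
  simp only [cm, decide_eq_true_eq]
  omega

lemma implicant_iff15 {m : ℕ} (hm : n = 3 * m) (q : Fin n → Option Bool) :
    IsImplicant (cm n) q ↔ m ≤ (atr q).card ∧ m ≤ (afa q).card := by
  constructor
  · intro h
    constructor
    · have hy := h (fun i => decide (q i = some true)) ?_
      · rw [cm_true_iff15 hm] at hy
        have he : (Finset.univ.filter fun i => decide (q i = some true) = true) = atr q := by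
          ext i; simp [atr]
        rw [he] at hy
        exact hy.1
      · intro i b hb; cases b <;> simp [hb]
    · have hy := h (fun i => !decide (q i = some false)) ?_
      · rw [cm_true_iff15 hm] at hy
        have hs := count_sum15 (fun i => !decide (q i = some false))
        have he : (Finset.univ.filter fun i => (!decide (q i = some false)) = false) = afa q := by
          ext i; simp [afa]
        rw [he] at hs
        omega
      · intro i b hb; cases b <;> simp [hb]
  · rintro ⟨h1, h2⟩ y hy
    rw [cm_true_iff15 hm]
    have hA : atr q ⊆ Finset.univ.filter fun i => y i = true := by
      intro i hi
      simp only [atr, Finset.mem_filter] at hi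
      simp only [Finset.mem_filter, Finset.mem_univ, true_and]
      exact hy i true hi.2
    have hB : afa q ⊆ Finset.univ.filter fun i => y i = false := by
      intro i hi
      simp only [afa, Finset.mem_filter] at hi
      simp only [Finset.mem_filter, Finset.mem_univ, true_and]
      exact hy i false hi.2
    have c1 := Finset.card_le_card hA
    have c2 := Finset.card_le_card hB
    have hs := count_sum15 y
    omega

lemma atr_update_none15 (q : Fin n → Option Bool) (i : Fin n) :
    atr (Function.update q i none) = (atr q).erase i := by
  ext j
  simp only [atr, Finset.mem_erase, Finset.mem_filter, Finset.mem_univ, true_and]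
  by_cases hj : j = i
  · subst hj; simp
  · simp [Function.update_of_ne hj, hj]

lemma afa_update_none15 (q : Fin n → Option Bool) (i : Fin n) :
    afa (Function.update q i none) = (afa q).erase i := by
  ext j
  simp only [afa, Finset.mem_erase, Finset.mem_filter, Finset.mem_univ, true_and]
  by_cases hj : j = i
  · subst hj; simp
  · simp [Function.update_of_ne hj, hj]

lemma prime_iff15 {m : ℕ} (hm : n = 3 * m) (q : Fin n → Option Bool) :
    IsPrimeImplicant (cm n) q ↔ (atr q).card = m ∧ (afa q).card = m := by
  constructor
  · rintro ⟨himp, hmin⟩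
    have himp' := (implicant_iff15 hm q).1 himp
    have key : ∀ i : Fin n, q i ≠ none →
        ¬ IsImplicant (cm n) (Function.update q i none) := by
      intro i hi
      apply hmin
      · intro j c hj
        by_cases hji : j = i
        · subst hji; rw [Function.update_self] at hj; exact absurd hj (by simp)
        · rwa [Function.update_of_ne hji] at hj
      · intro h
        have := congrFun h i
        rw [Function.update_self] at this
        exact hi this.symm
    by_contra hc
    have hsplit : m < (atr q).card ∨ m < (afa q).card := by omega
    rcases hsplit with hgt | hgt
    · have hne : (atr q).Nonempty := Finset.card_pos.mp (by omega)
      obtain ⟨i, hi⟩ := hne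
      have hqi : q i = some true := (Finset.mem_filter.mp hi).2
      apply key i (by simp [hqi])
      rw [implicant_iff15 hm, atr_update_none15, afa_update_none15]
      have hiA : i ∉ afa q := by simp [afa, hqi]
      rw [Finset.erase_eq_of_notMem hiA]
      rw [Finset.card_erase_of_mem hi]
      omega
    · have hne : (afa q).Nonempty := Finset.card_pos.mp (by omega)
      obtain ⟨i, hi⟩ := hne
      have hqi : q i = some false := (Finset.mem_filter.mp hi).2
      apply key i (by simp [hqi])
      rw [implicant_iff15 hm, atr_update_none15, afa_update_none15]
      have hiA : i ∉ atr q := by simp [atr, hqi]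
      rw [Finset.erase_eq_of_notMem hiA]
      rw [Finset.card_erase_of_mem hi]
      omega
  · rintro ⟨h1, h2⟩
    have himp : IsImplicant (cm n) q := (implicant_iff15 hm q).2 ⟨h1.ge, h2.ge⟩
    refine ⟨himp, ?_⟩
    intro q' hsub hne himp'
    rw [implicant_iff15 hm] at himp'
    have hex : ∃ i, q' i ≠ q i := by
      by_contra h; push_neg at h; exact hne (funext h)
    obtain ⟨i, hi⟩ := hex
    have hq'i : q' i = none := by
      by_contra h
      obtain ⟨c, hc⟩ := Option.ne_none_iff_exists'.mp h
      exact hi (hc.trans (hsub i c hc).symm)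
    have hqi : q i ≠ none := fun h => hi (hq'i.trans h.symm)
    obtain ⟨b, hb⟩ := Option.ne_none_iff_exists'.mp hqi
    have hAsub : atr q' ⊆ atr q := by
      intro j hj
      simp only [atr, Finset.mem_filter, Finset.mem_univ, true_and] at hj ⊢
      exact hsub j true hj
    have hBsub : afa q' ⊆ afa q := by
      intro j hj
      simp only [afa, Finset.mem_filter, Finset.mem_univ, true_and] at hj ⊢
      exact hsub j false hj
    cases b with
    | true =>
      have hiA : i ∈ atr q := by simp [atr, hb]
      have hiA' : i ∉ atr q' := by simp [atr, hq'i]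
      have hlt : (atr q').card < (atr q).card :=
        Finset.card_lt_card ⟨hAsub, fun hs2 => hiA' (hs2 hiA)⟩
      omega
    | false =>
      have hiA : i ∈ afa q := by simp [afa, hb]
      have hiA' : i ∉ afa q' := by simp [afa, hq'i]
      have hlt : (afa q').card < (afa q).card :=
        Finset.card_lt_card ⟨hBsub, fun hs2 => hiA' (hs2 hiA)⟩
      omega

/-- Build a partial assignment from the true-set and false-set. -/
noncomputable def qOf15 (A B : Finset (Fin n)) : Fin n → Option Bool :=
  fun i => if i ∈ A then some true else if i ∈ B then some false else none

lemma atr_qOf15 (A B : Finset (Fin n)) : atr (qOf15 A B) = A := by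
  ext i
  by_cases hA : i ∈ A
  · simp [atr, qOf15, hA]
  · by_cases hB : i ∈ B <;> simp [atr, qOf15, hA, hB]

lemma afa_qOf15 (A B : Finset (Fin n)) (h : Disjoint A B) : afa (qOf15 A B) = B := by
  ext i
  by_cases hA : i ∈ A
  · have hB : i ∉ B := Finset.disjoint_left.mp h hA
    rw [afa, Finset.mem_filter]; simp [qOf15, hA, hB]
  · by_cases hB : i ∈ B <;> rw [afa, Finset.mem_filter] <;> simp [qOf15, hA, hB]

lemma qOf15_atr_afa (q : Fin n → Option Bool) : qOf15 (atr q) (afa q) = q := by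
  funext i
  rcases h : q i with _ | b
  · simp [qOf15, atr, afa, h]
  · cases b <;> simp [qOf15, atr, afa, h]

lemma count_main15 {m : ℕ} (hm : n = 3 * m) :
    (Finset.univ.filter fun q : Fin n → Option Bool =>
        (atr q).card = m ∧ (afa q).card = m).card
      = Nat.choose n m * Nat.choose (2 * m) m := by
  classical
  have hset : (Finset.univ.filter fun q : Fin n → Option Bool =>
      (atr q).card = m ∧ (afa q).card = m)
      = (Finset.univ.powersetCard m).biUnion
          (fun A => (Aᶜ.powersetCard m).image (qOf15 A)) := by
    ext q
    simp only [Finset.mem_filter, Finset.mem_univ, true_and, Finset.mem_biUnion,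
      Finset.mem_powersetCard, Finset.mem_image]
    constructor
    · rintro ⟨hA, hB⟩
      refine ⟨atr q, ⟨Finset.subset_univ _, hA⟩, afa q, ⟨?_, hB⟩, qOf15_atr_afa q⟩
      intro i hi
      simp only [afa, Finset.mem_filter, Finset.mem_univ, true_and] at hi
      simp [atr, hi]
    · rintro ⟨A, ⟨-, hA⟩, B, ⟨hBsub, hB⟩, rfl⟩
      have hdisj : Disjoint A B := Finset.disjoint_left.mpr fun {i} hiA hiB =>
        (Finset.mem_compl.mp (hBsub hiB)) hiA
      rw [atr_qOf15, afa_qOf15 A B hdisj]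
      exact ⟨hA, hB⟩
  rw [hset, Finset.card_biUnion]
  · have hc : ∀ A ∈ (Finset.univ : Finset (Fin n)).powersetCard m,
        ((Aᶜ.powersetCard m).image (qOf15 A)).card = Nat.choose (2 * m) m := by
      intro A hA
      rw [Finset.mem_powersetCard] at hA
      rw [Finset.card_image_of_injOn, Finset.card_powersetCard, Finset.card_compl,
        Fintype.card_fin, hA.2]
      · congr 1; omega
      · intro B hB B' hB' hqq
        simp only [Finset.mem_coe, Finset.mem_powersetCard] at hB hB'
        have hd : Disjoint A B := Finset.disjoint_left.mpr fun {i} hiA hiB =>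
          (Finset.mem_compl.mp (hB.1 hiB)) hiA
        have hd' : Disjoint A B' := Finset.disjoint_left.mpr fun {i} hiA hiB =>
          (Finset.mem_compl.mp (hB'.1 hiB)) hiA
        rw [← afa_qOf15 A B hd, ← afa_qOf15 A B' hd', hqq]
    rw [Finset.sum_congr rfl hc, Finset.sum_const, Finset.card_powersetCard,
      Finset.card_univ, Fintype.card_fin, smul_eq_mul]
  · intro A hA A' hA' hne
    rw [Function.onFun, Finset.disjoint_left]
    intro q hq hq'
    simp only [Finset.mem_image] at hq hq'
    obtain ⟨B, hB, rfl⟩ := hq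
    obtain ⟨B', hB', heq⟩ := hq'
    apply hne
    rw [← atr_qOf15 A B, ← heq, atr_qOf15]

/-! ### Decision tree path machinery -/

/-- Three-way selector on a ternary value. -/
def sel3 {α : Type _} (v : Option Bool) (a b c : α) : α :=
  match v with
  | some false => a
  | none => b
  | some true => c

@[simp] lemma sel3_false {α : Type _} (a b c : α) : sel3 (some false) a b c = a := rfl
@[simp] lemma sel3_none {α : Type _} (a b c : α) : sel3 none a b c = b := rfl
@[simp] lemma sel3_true {α : Type _} (a b c : α) : sel3 (some true) a b c = c := rfl

lemma ttEval_node {ι : Type} (i : ι) (t0 tu t1 : TTree ι) (x : ι → Option Bool) :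
    (TTree.node i t0 tu t1).eval x = sel3 (x i) (t0.eval x) (tu.eval x) (t1.eval x) := by
  rcases hx : x i with _ | (_ | _) <;> simp only [TTree.eval, hx] <;> rfl

/-- The query path taken by a ternary decision tree on an input. -/
def ttPath {ι : Type} : TTree ι → (ι → Option Bool) → List (ι × Option Bool)
  | .leaf _, _ => []
  | .node i t0 tu t1, x =>
    (i, x i) :: sel3 (x i) (ttPath t0 x) (ttPath tu x) (ttPath t1 x)

lemma mem_ttPath {ι : Type} (T : TTree ι) (x : ι → Option Bool) :
    ∀ p ∈ ttPath T x, x p.1 = p.2 := by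
  induction T with
  | leaf b => intro p hp; simp [ttPath] at hp
  | node i t0 tu t1 ih0 ihu ih1 =>
    intro p hp
    rw [ttPath, List.mem_cons] at hp
    rcases hp with hp | hp
    · subst hp; rfl
    · rcases hx : x i with _ | (_ | _) <;> rw [hx] at hp <;> simp only [sel3_false,
        sel3_none, sel3_true] at hp
      · exact ihu p hp
      · exact ih0 p hp
      · exact ih1 p hp

lemma ttPath_congr {ι : Type} (T : TTree ι) (x x' : ι → Option Bool)
    (h : ∀ p ∈ ttPath T x, x' p.1 = x p.1) :
    ttPath T x' = ttPath T x ∧ T.eval x' = T.eval x := by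
  induction T with
  | leaf b => exact ⟨rfl, rfl⟩
  | node i t0 tu t1 ih0 ihu ih1 =>
    have hhead : x' i = x i := h (i, x i) (by rw [ttPath]; exact List.mem_cons_self)
    rcases hx : x i with _ | (_ | _)
    · have hsub : ∀ p ∈ ttPath tu x, x' p.1 = x p.1 := by
        intro p hp
        exact h p (by rw [ttPath, hx]; exact List.mem_cons_of_mem _ (by simpa using hp))
      obtain ⟨h1, h2⟩ := ihu hsub
      constructor
      · rw [ttPath, ttPath, hhead, hx]; simp [h1]
      · rw [ttEval_node, ttEval_node, hhead, hx]; simp [h2]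
    · have hsub : ∀ p ∈ ttPath t0 x, x' p.1 = x p.1 := by
        intro p hp
        exact h p (by rw [ttPath, hx]; exact List.mem_cons_of_mem _ (by simpa using hp))
      obtain ⟨h1, h2⟩ := ih0 hsub
      constructor
      · rw [ttPath, ttPath, hhead, hx]; simp [h1]
      · rw [ttEval_node, ttEval_node, hhead, hx]; simp [h2]
    · have hsub : ∀ p ∈ ttPath t1 x, x' p.1 = x p.1 := by
        intro p hp
        exact h p (by rw [ttPath, hx]; exact List.mem_cons_of_mem _ (by simpa using hp))
      obtain ⟨h1, h2⟩ := ih1 hsub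
      constructor
      · rw [ttPath, ttPath, hhead, hx]; simp [h1]
      · rw [ttEval_node, ttEval_node, hhead, hx]; simp [h2]

lemma card_le_size15 {ι : Type} (T : TTree ι) (Q : Finset (ι → Option Bool))
    (h : ∀ x ∈ Q, ∀ y ∈ Q, ttPath T x = ttPath T y → x = y) :
    Q.card ≤ T.size := by
  classical
  induction T generalizing Q with
  | leaf b =>
    have : Q.card ≤ 1 := Finset.card_le_one.mpr fun x hx y hy => h x hx y hy rfl
    simpa [TTree.size] using this
  | node i t0 tu t1 ih0 ihu ih1 =>
    set Q0 := Q.filter (fun x => x i = some false) with hQ0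
    set Qu := Q.filter (fun x => x i = none) with hQu
    set Q1 := Q.filter (fun x => x i = some true) with hQ1
    have hcard : Q0.card + (Qu.card + Q1.card) = Q.card := by
      have e1 := Finset.card_filter_add_card_filter_not
        (s := Q) (p := fun x => x i = some false)
      have e2 := Finset.card_filter_add_card_filter_not
        (s := Q.filter fun x => ¬ x i = some false) (p := fun x => x i = none)
      have e3 : (Q.filter fun x => ¬ x i = some false).filter (fun x => x i = none)
          = Qu := by
        rw [Finset.filter_filter, hQu]
        ext x
        simp only [Finset.mem_filter]
        constructor
        · rintro ⟨hQ, -, h2⟩; exact ⟨hQ, h2⟩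
        · rintro ⟨hQ, h2⟩; exact ⟨hQ, by simp [h2], h2⟩
      have e4 : (Q.filter fun x => ¬ x i = some false).filter (fun x => ¬ x i = none)
          = Q1 := by
        rw [Finset.filter_filter, hQ1]
        ext x
        simp only [Finset.mem_filter]
        rcases hx : x i with _ | (_ | _) <;> simp [hx]
      rw [e3, e4] at e2
      rw [e2]
      exact e1
    have inj0 : ∀ x ∈ Q0, ∀ y ∈ Q0, ttPath t0 x = ttPath t0 y → x = y := by
      intro x hx y hy hp
      rw [hQ0, Finset.mem_filter] at hx hy
      refine h x hx.1 y hy.1 ?_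
      rw [ttPath, ttPath, hx.2, hy.2]
      simp [hp]
    have inju : ∀ x ∈ Qu, ∀ y ∈ Qu, ttPath tu x = ttPath tu y → x = y := by
      intro x hx y hy hp
      rw [hQu, Finset.mem_filter] at hx hy
      refine h x hx.1 y hy.1 ?_
      rw [ttPath, ttPath, hx.2, hy.2]
      simp [hp]
    have inj1 : ∀ x ∈ Q1, ∀ y ∈ Q1, ttPath t1 x = ttPath t1 y → x = y := by
      intro x hx y hy hp
      rw [hQ1, Finset.mem_filter] at hx hy
      refine h x hx.1 y hy.1 ?_
      rw [ttPath, ttPath, hx.2, hy.2]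
      simp [hp]
    have b0 := ih0 Q0 inj0
    have bu := ihu Qu inju
    have b1 := ih1 Q1 inj1
    have : (TTree.node i t0 tu t1).size = t0.size + tu.size + t1.size := rfl
    omega

lemma hfext_implicant15 {ι : Type} (f : (ι → Bool) → Bool) (q : ι → Option Bool)
    (h : IsImplicant f q) : hfext f q = some true := by
  rw [hfext, if_pos]
  intro y hy
  exact h y hy

lemma hfext_eq_true15 {ι : Type} {f : (ι → Bool) → Bool} {x : ι → Option Bool}
    (h : hfext f x = some true) : ∀ y ∈ Res x, f y = true := by
  by_cases h1 : ∀ y ∈ Res x, f y = true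
  · exact h1
  · exfalso
    rw [hfext, if_neg h1] at h
    by_cases h2 : ∀ y ∈ Res x, f y = false
    · rw [if_pos h2] at h; simp at h
    · rw [if_neg h2] at h; simp at h

lemma prime_mem_path15 {ι : Type} (f : (ι → Bool) → Bool) (T : TTree ι)
    (hT : ∀ x, T.eval x = hfext f x) (q : ι → Option Bool)
    (hq : IsPrimeImplicant f q) (i : ι) (b : Bool) (hqi : q i = some b) :
    (i, some b) ∈ ttPath T q := by
  classical
  by_cases hmem : (i, q i) ∈ ttPath T q
  · rwa [hqi] at hmem
  exfalso
  set q' : ι → Option Bool := fun j => if (j, q j) ∈ ttPath T q then q j else none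
    with hq'def
  have hsub : SubAsn q' q := by
    intro j c hj
    simp only [hq'def] at hj
    split at hj
    · exact hj
    · exact absurd hj (by simp)
  have hne : q' ≠ q := by
    intro h
    have h2 : q' i = q i := congrFun h i
    simp only [hq'def] at h2
    rw [if_neg hmem, hqi] at h2
    exact absurd h2 (by simp)
  have himp : IsImplicant f q' := by
    intro y hy
    set z : ι → Option Bool := fun j => if (j, q j) ∈ ttPath T q then q j else some (y j)
      with hzdef
    have hagree : ∀ p ∈ ttPath T q, z p.1 = q p.1 := by
      intro p hp
      have hv : q p.1 = p.2 := mem_ttPath T q p hp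
      have hm : (p.1, q p.1) ∈ ttPath T q := by rw [hv]; exact hp
      simp only [hzdef]
      rw [if_pos hm]
    obtain ⟨hpath, heval⟩ := ttPath_congr T q z hagree
    have hq1 : hfext f q = some true := hfext_implicant15 f q hq.1
    have hz1 : hfext f z = some true := by rw [← hT z, heval, hT q, hq1]
    apply hfext_eq_true15 hz1 y
    intro j c hj
    simp only [hzdef] at hj
    split at hj
    · next hjm =>
        apply hy j c
        simp only [hq'def]
        rw [if_pos hjm]
        exact hj
    · exact (Option.some_injective _ hj)
  exact hq.2 q' hsub hne himp

lemma prime_path_inj15 {ι : Type} (f : (ι → Bool) → Bool) (T : TTree ι)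
    (hT : ∀ x, T.eval x = hfext f x) (q q' : ι → Option Bool)
    (hq : IsPrimeImplicant f q) (hq' : IsPrimeImplicant f q')
    (h : ttPath T q = ttPath T q') : q = q' := by
  funext j
  rcases h1 : q j with _ | b
  · rcases h2 : q' j with _ | b'
    · rfl
    · have hm := prime_mem_path15 f T hT q' hq' j b' h2
      rw [← h] at hm
      have := mem_ttPath T q (j, some b') hm
      rw [h1] at this
      exact absurd this (by simp)
  · have hm := prime_mem_path15 f T hT q hq j b h1
    rw [h] at hm
    have := mem_ttPath T q' (j, some b) hm
    rw [this]

end Stmt15Aux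

/-- `cm_n` has exactly `C(n, n/3)·C(2n/3, n/3)` prime implicants, and hence
every ternary decision tree computing its hazard-free extension has at least
that many leaves. -/
theorem stmt15 (n : ℕ) (hn : 0 < n) (h3 : 3 ∣ n) :
    (Finset.univ.filter
        fun q : Fin n → Option Bool => IsPrimeImplicant (cm n) q).card
      = Nat.choose n (n/3) * Nat.choose (2*n/3) (n/3) ∧
    ∀ T : TTree (Fin n), (∀ x, T.eval x = hfext (cm n) x) →
      Nat.choose n (n/3) * Nat.choose (2*n/3) (n/3) ≤ T.size := by
  obtain ⟨m, rfl⟩ := h3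
  have hm : 3 * m / 3 = m := by omega
  have hm2 : 2 * (3 * m) / 3 = 2 * m := by omega
  have hchar : (Finset.univ.filter
        fun q : Fin (3 * m) → Option Bool => IsPrimeImplicant (cm (3 * m)) q)
      = Finset.univ.filter fun q : Fin (3 * m) → Option Bool =>
          (atr q).card = m ∧ (afa q).card = m := by
    ext q
    simp only [Finset.mem_filter, Finset.mem_univ, true_and]
    exact prime_iff15 rfl q
  constructor
  · rw [hm, hm2, hchar, count_main15 rfl]
  · intro T hT
    rw [hm, hm2, ← count_main15 rfl, ← hchar]
    refine card_le_size15 T _ ?_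
    intro x hx y hy hp
    exact prime_path_inj15 _ T hT x y (Finset.mem_filter.mp hx).2
      (Finset.mem_filter.mp hy).2 hp
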